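/- For every b > 0 the following three conditions are equivalent: (i) s_b = m/(m+b); (ii) β_ν(s) = m·(1−s) for some s ∈ (0,1); (iii) β_ν(s) = m·(1−s) for all s ∈ (0,1). In particular, with ρ := q(ℓ − m/p) > 0 and q ≥ p > 1, one has −1/(q·s_ρ) = −ℓ/m + 1/p − 1/q if and only if β_ν(s) = m·(1−s) for some (hence all) s ∈ (0,1) (second claim in Remark 1.2). -/

import Mathlib

open MeasureTheory Filter
open scoped ENNReal

noncomputable section

/-- The half-open unit cube `(0,1]^m`. -/
def unitCube (m : ℕ) : Set (Fin m → ℝ) := {x | ∀ i, x i ∈ Set.Ioc (0 : ℝ) 1}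

/-- The half-open dyadic cube of generation `n` indexed by `l ∈ ℤ^m`. -/
def dyadicCube (m n : ℕ) (l : Fin m → ℤ) : Set (Fin m → ℝ) :=
  {x | ∀ i, x i ∈ Set.Ioc ((l i : ℝ) / 2 ^ n) (((l i : ℝ) + 1) / 2 ^ n)}

/-- `β_n^ν(s) = log (∑_{C ∈ 𝒟_n} ν(C)^s) / log (2^n)`, the sum running over all
dyadic cubes of generation `n` with positive `ν`-measure. -/
def betaN (m : ℕ) (ν : Measure (Fin m → ℝ)) (n : ℕ) (s : ℝ) : ℝ :=
  Real.log (∑' l : {l : Fin m → ℤ // 0 < ν (dyadicCube m n l)},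
      (ν (dyadicCube m n l.1)).toReal ^ s) / Real.log ((2 : ℝ) ^ n)

/-- The `L^q`-spectrum `β_ν(s) = limsup_n β_n^ν(s)`. -/
def lqSpectrum (m : ℕ) (ν : Measure (Fin m → ℝ)) (s : ℝ) : ℝ :=
  limsup (fun n => betaN m ν n s) atTop

/-- `s_b = inf {s > 0 : β_ν(s) - b·s ≤ 0}`. -/
def sb (m : ℕ) (ν : Measure (Fin m → ℝ)) (b : ℝ) : ℝ :=
  sInf {s : ℝ | 0 < s ∧ lqSpectrum m ν s - b * s ≤ 0}

namespace Stmt10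

lemma mem_dyadicCube_iff {m n : ℕ} {l : Fin m → ℤ} {x : Fin m → ℝ} :
    x ∈ dyadicCube m n l ↔ ∀ i, l i = ⌈(2:ℝ)^n * x i⌉ - 1 := by
  have h2 : (0:ℝ) < 2 ^ n := by positivity
  constructor
  · intro hx i
    obtain ⟨h1, h2'⟩ := hx i
    have hc : ⌈(2:ℝ)^n * x i⌉ = l i + 1 := by
      rw [Int.ceil_eq_iff]
      constructor
      · push_cast
        rw [div_lt_iff₀ h2] at h1
        nlinarith [h1]
      · push_cast
        rw [le_div_iff₀ h2] at h2'
        nlinarith [h2']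
    omega
  · intro h i
    have hc : ⌈(2:ℝ)^n * x i⌉ = l i + 1 := by have := h i; omega
    rw [Int.ceil_eq_iff] at hc
    obtain ⟨h1, h2'⟩ := hc
    push_cast at h1 h2'
    constructor
    · rw [div_lt_iff₀ h2]; nlinarith
    · rw [le_div_iff₀ h2]; push_cast; nlinarith

lemma measurableSet_dyadicCube {m n : ℕ} (l : Fin m → ℤ) :
    MeasurableSet (dyadicCube m n l) := by
  have : dyadicCube m n l = ⋂ i, (fun x : Fin m → ℝ => x i) ⁻¹' Set.Ioc ((l i : ℝ) / 2 ^ n) (((l i : ℝ) + 1) / 2 ^ n) := by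
    ext x; simp [dyadicCube, Set.mem_iInter]
  rw [this]
  exact MeasurableSet.iInter fun i => (measurable_pi_apply i) measurableSet_Ioc

lemma measurableSet_unitCube {m : ℕ} : MeasurableSet (unitCube m) := by
  have : unitCube m = ⋂ i, (fun x : Fin m → ℝ => x i) ⁻¹' Set.Ioc (0:ℝ) 1 := by
    ext x; simp [unitCube, Set.mem_iInter]
  rw [this]
  exact MeasurableSet.iInter fun i => (measurable_pi_apply i) measurableSet_Ioc

/-- The finite index set of generation-`n` cubes meeting the unit cube. -/
def Fn (m n : ℕ) : Finset (Fin m → ℤ) := Fintype.piFinset fun _ => Finset.Icc 0 (2^n - 1)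

lemma card_Fn (m n : ℕ) : (Fn m n).card = 2 ^ (n * m) := by
  rw [Fn, Fintype.card_piFinset]
  have hcard : (Finset.Icc (0:ℤ) (2^n - 1)).card = 2 ^ n := by
    rw [Int.card_Icc, show ((2:ℤ)^n - 1 + 1 - 0) = ((2^n : ℕ) : ℤ) by push_cast; ring,
      Int.toNat_natCast]
  simp only [hcard]
  rw [Finset.prod_const, Finset.card_univ, Fintype.card_fin, ← pow_mul]

lemma addr_mem_Fn {m n : ℕ} {x : Fin m → ℝ} (hx : x ∈ unitCube m) :
    (fun i => ⌈(2:ℝ)^n * x i⌉ - 1) ∈ Fn m n := by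
  rw [Fn, Fintype.mem_piFinset]
  intro i
  obtain ⟨h0, h1⟩ := hx i
  have h2 : (0:ℝ) < 2 ^ n := by positivity
  have hpos : 0 < ⌈(2:ℝ)^n * x i⌉ := Int.ceil_pos.2 (by positivity)
  have hle : ⌈(2:ℝ)^n * x i⌉ ≤ 2 ^ n := by
    apply Int.ceil_le.2
    push_cast
    nlinarith
  rw [Finset.mem_Icc]
  omega

lemma cubes_disjoint {m n : ℕ} {l l' : Fin m → ℤ} (h : l ≠ l') :
    Disjoint (dyadicCube m n l) (dyadicCube m n l') := by
  rw [Set.disjoint_left]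
  intro x hx hx'
  rw [mem_dyadicCube_iff] at hx hx'
  exact h (funext fun i => (hx i).trans (hx' i).symm)

lemma mem_addr_cube {m n : ℕ} {x : Fin m → ℝ} :
    x ∈ dyadicCube m n (fun i => ⌈(2:ℝ)^n * x i⌉ - 1) := by
  rw [mem_dyadicCube_iff]; intro i; rfl


variable {m n : ℕ} {ν : Measure (Fin m → ℝ)} [IsProbabilityMeasure ν]

lemma measure_cube_eq_zero (hν : ν (unitCube m) = 1) {l : Fin m → ℤ} (hl : l ∉ Fn m n) :
    ν (dyadicCube m n l) = 0 := by
  have hsub : dyadicCube m n l ⊆ (unitCube m)ᶜ := by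
    intro x hx hx'
    rw [mem_dyadicCube_iff] at hx
    exact hl ((funext hx : l = _) ▸ addr_mem_Fn hx')
  refine measure_mono_null hsub ?_
  rw [prob_compl_eq_one_sub measurableSet_unitCube, hν]
  simp

lemma sum_measure_Fn (hν : ν (unitCube m) = 1) :
    ∑ l ∈ Fn m n, ν (dyadicCube m n l) = 1 := by
  rw [← measure_biUnion_finset (fun a _ b _ hab => cubes_disjoint hab)
    (fun l _ => measurableSet_dyadicCube l)]
  apply le_antisymm
  · exact (measure_mono (Set.subset_univ _)).trans_eq measure_univ
  · rw [← hν]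
    apply measure_mono
    intro x hx
    exact Set.mem_biUnion (addr_mem_Fn hx) mem_addr_cube

lemma sum_q (hν : ν (unitCube m) = 1) :
    ∑ l ∈ Fn m n, (ν (dyadicCube m n l)).toReal = 1 := by
  rw [← ENNReal.toReal_sum (fun l _ => measure_ne_top ν _), sum_measure_Fn hν]
  simp

lemma tsum_eq_sum_Fn (hν : ν (unitCube m) = 1) {s : ℝ} (hs : 0 < s) :
    (∑' l : {l : Fin m → ℤ // 0 < ν (dyadicCube m n l)},
      (ν (dyadicCube m n l.1)).toReal ^ s)
      = ∑ l ∈ Fn m n, (ν (dyadicCube m n l)).toReal ^ s := by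
  refine (tsum_subtype {l : Fin m → ℤ | 0 < ν (dyadicCube m n l)}
      (fun l => (ν (dyadicCube m n l)).toReal ^ s)).trans ?_
  rw [tsum_eq_sum (s := Fn m n) ?_]
  · apply Finset.sum_congr rfl
    intro l _
    rcases eq_or_lt_of_le (zero_le : 0 ≤ ν (dyadicCube m n l)) with h | h
    · rw [Set.indicator_of_notMem
        (show l ∉ {l | 0 < ν (dyadicCube m n l)} by simp [Set.mem_setOf_eq, ← h]), ← h]
      simp [Real.zero_rpow hs.ne']
    · exact Set.indicator_of_mem (show l ∈ {l | 0 < ν (dyadicCube m n l)} from h) _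
  · intro l hl
    rw [Set.indicator_of_notMem
      (show l ∉ {l | 0 < ν (dyadicCube m n l)} by simp [measure_cube_eq_zero hν hl])]

lemma betaN_eq (hν : ν (unitCube m) = 1) {s : ℝ} (hs : 0 < s) :
    betaN m ν n s
      = Real.log (∑ l ∈ Fn m n, (ν (dyadicCube m n l)).toReal ^ s) / (n * Real.log 2) := by
  rw [betaN, tsum_eq_sum_Fn hν hs, Real.log_pow]


lemma one_le_T (hν : ν (unitCube m) = 1) {s : ℝ} (hs : 0 < s) (hs1 : s ≤ 1) :
    1 ≤ ∑ l ∈ Fn m n, (ν (dyadicCube m n l)).toReal ^ s := by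
  rw [← sum_q (n := n) hν]
  apply Finset.sum_le_sum
  intro l _
  rcases eq_or_lt_of_le (ENNReal.toReal_nonneg :
      0 ≤ (ν (dyadicCube m n l)).toReal) with h | h
  · rw [← h, Real.zero_rpow hs.ne']
  · have hx1 : (ν (dyadicCube m n l)).toReal ≤ 1 :=
      ENNReal.toReal_le_of_le_ofReal zero_le_one (by simpa using prob_le_one)
    calc (ν (dyadicCube m n l)).toReal = (ν (dyadicCube m n l)).toReal ^ (1:ℝ) :=
          (Real.rpow_one _).symm
    _ ≤ (ν (dyadicCube m n l)).toReal ^ s := Real.rpow_le_rpow_of_exponent_ge h hx1 hs1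

lemma T_le (hν : ν (unitCube m) = 1) {s : ℝ} (hs : 0 < s) (hs1 : s ≤ 1) :
    ∑ l ∈ Fn m n, (ν (dyadicCube m n l)).toReal ^ s
      ≤ ((2:ℝ) ^ (n * m)) ^ (1 - s) := by
  have key := Real.inner_le_weight_mul_Lp_of_nonneg (Fn m n) (p := 1/s)
    (by rw [le_div_iff₀ hs]; simpa using hs1) (fun _ => 1)
    (fun l => (ν (dyadicCube m n l)).toReal ^ s) (fun _ => zero_le_one)
    (fun l => Real.rpow_nonneg ENNReal.toReal_nonneg s)
  simp only [one_mul] at key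
  have h1 : ∀ l, ((ν (dyadicCube m n l)).toReal ^ s) ^ (1/s : ℝ)
      = (ν (dyadicCube m n l)).toReal := by
    intro l
    rw [← Real.rpow_mul ENNReal.toReal_nonneg, mul_one_div, div_self hs.ne', Real.rpow_one]
  simp only [h1, sum_q hν] at key
  have h2 : ((1:ℝ)/s)⁻¹ = s := by field_simp
  rw [h2] at key
  calc ∑ l ∈ Fn m n, (ν (dyadicCube m n l)).toReal ^ s
      ≤ (∑ _l ∈ Fn m n, (1:ℝ)) ^ (1 - s) * 1 ^ s := key
    _ = ((2:ℝ) ^ (n * m)) ^ (1 - s) := by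
        rw [Finset.sum_const, card_Fn, nsmul_eq_mul, mul_one, Real.one_rpow, mul_one]
        norm_num

lemma betaN_nonneg (hν : ν (unitCube m) = 1) {s : ℝ} (hs : 0 < s) (hs1 : s ≤ 1) :
    0 ≤ betaN m ν n s := by
  rw [betaN_eq hν hs]
  apply div_nonneg
  · exact Real.log_nonneg (one_le_T hν hs hs1)
  · positivity

lemma betaN_le (hν : ν (unitCube m) = 1) {s : ℝ} (hs : 0 < s) (hs1 : s ≤ 1) :
    betaN m ν n s ≤ m * (1 - s) := by
  rw [betaN_eq hν hs]
  rcases Nat.eq_zero_or_pos n with rfl | hn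
  · simp
    nlinarith [Nat.cast_nonneg (α := ℝ) m]
  · have hD : (0:ℝ) < n * Real.log 2 := by
      have := Real.log_pos (by norm_num : (1:ℝ) < 2)
      positivity
    rw [div_le_iff₀ hD]
    have hlog : Real.log (∑ l ∈ Fn m n, (ν (dyadicCube m n l)).toReal ^ s)
        ≤ (1 - s) * ((n * m : ℕ) * Real.log 2) := by
      calc Real.log (∑ l ∈ Fn m n, (ν (dyadicCube m n l)).toReal ^ s)
          ≤ Real.log (((2:ℝ) ^ (n * m)) ^ (1 - s)) :=
            Real.log_le_log (lt_of_lt_of_le one_pos (one_le_T hν hs hs1)) (T_le hν hs hs1)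
        _ = (1 - s) * ((n * m : ℕ) * Real.log 2) := by
            rw [Real.log_rpow (by positivity), Real.log_pow]
    refine hlog.trans (le_of_eq ?_)
    push_cast
    ring

lemma betaN_convex (hν : ν (unitCube m) = 1) {a b t : ℝ}
    (ha : 0 < a) (ha1 : a ≤ 1) (hb : 0 < b) (hb1 : b ≤ 1) (ht : 0 < t) (ht1 : t < 1) :
    betaN m ν n (t * a + (1 - t) * b) ≤ t * betaN m ν n a + (1 - t) * betaN m ν n b := by
  have hmid : 0 < t * a + (1 - t) * b := by nlinarith
  have hmid1 : t * a + (1 - t) * b ≤ 1 := by nlinarith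
  set q : (Fin m → ℤ) → ℝ := fun l => (ν (dyadicCube m n l)).toReal with hqdef
  have hq0 : ∀ l, 0 ≤ q l := fun l => ENNReal.toReal_nonneg
  have hpq : (1/t : ℝ).HolderConjugate (1/(1-t)) := by
    rw [Real.holderConjugate_iff]
    constructor
    · rw [lt_div_iff₀ ht]; linarith
    · rw [one_div, one_div, inv_inv, inv_inv]; ring
  have holder := Real.inner_le_Lp_mul_Lq_of_nonneg (Fn m n)
    (f := fun l => q l ^ (t * a)) (g := fun l => q l ^ ((1 - t) * b)) hpq
    (fun l _ => Real.rpow_nonneg (hq0 l) _) (fun l _ => Real.rpow_nonneg (hq0 l) _)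
  have e1 : ∀ l, q l ^ (t * a) * q l ^ ((1 - t) * b) = q l ^ (t * a + (1 - t) * b) := by
    intro l
    rcases eq_or_lt_of_le (hq0 l) with h | h
    · rw [← h, Real.zero_rpow hmid.ne', Real.zero_rpow (by positivity : (0:ℝ) < t*a).ne',
        zero_mul]
    · rw [Real.rpow_add h]
  have e2 : ∀ l, (q l ^ (t * a)) ^ (1/t : ℝ) = q l ^ a := by
    intro l
    rw [← Real.rpow_mul (hq0 l)]
    congr 1
    field_simp
  have e3 : ∀ l, (q l ^ ((1 - t) * b)) ^ (1/(1-t) : ℝ) = q l ^ b := by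
    intro l
    rw [← Real.rpow_mul (hq0 l)]
    congr 1
    have : (1:ℝ) - t ≠ 0 := by linarith
    field_simp
  simp only [e1, e2, e3, one_div_one_div] at holder
  -- now: T(mid) ≤ (T a)^t * (T b)^(1-t)
  have hTa : (1:ℝ) ≤ ∑ l ∈ Fn m n, q l ^ a := one_le_T hν ha ha1
  have hTb : (1:ℝ) ≤ ∑ l ∈ Fn m n, q l ^ b := one_le_T hν hb hb1
  have hTm : (1:ℝ) ≤ ∑ l ∈ Fn m n, q l ^ (t * a + (1 - t) * b) := one_le_T hν hmid hmid1
  have hlog : Real.log (∑ l ∈ Fn m n, q l ^ (t * a + (1 - t) * b))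
      ≤ t * Real.log (∑ l ∈ Fn m n, q l ^ a) + (1 - t) * Real.log (∑ l ∈ Fn m n, q l ^ b) := by
    calc Real.log (∑ l ∈ Fn m n, q l ^ (t * a + (1 - t) * b))
        ≤ Real.log ((∑ l ∈ Fn m n, q l ^ a) ^ t * (∑ l ∈ Fn m n, q l ^ b) ^ (1 - t)) :=
          Real.log_le_log (lt_of_lt_of_le one_pos hTm) holder
      _ = _ := by
          rw [Real.log_mul (by positivity : ((∑ l ∈ Fn m n, q l ^ a) ^ t : ℝ) ≠ 0)
              (by positivity),
            Real.log_rpow (lt_of_lt_of_le one_pos hTa),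
            Real.log_rpow (lt_of_lt_of_le one_pos hTb)]
  rw [betaN_eq hν hmid, betaN_eq hν ha, betaN_eq hν hb]
  have hD : (0:ℝ) ≤ (n : ℝ) * Real.log 2 := by positivity
  rcases eq_or_lt_of_le hD with h | h
  · rw [← h]
    simp
  · rw [show t * (Real.log (∑ l ∈ Fn m n, q l ^ a) / ((n:ℝ) * Real.log 2))
        + (1 - t) * (Real.log (∑ l ∈ Fn m n, q l ^ b) / ((n:ℝ) * Real.log 2))
      = (t * Real.log (∑ l ∈ Fn m n, q l ^ a)
          + (1 - t) * Real.log (∑ l ∈ Fn m n, q l ^ b)) / ((n:ℝ) * Real.log 2) by ring]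
    exact div_le_div_of_nonneg_right hlog h.le


lemma limsup_ge_of_bounds {f : ℕ → ℝ} {c C : ℝ} (h0 : ∀ n, c ≤ f n) (h1 : ∀ n, f n ≤ C) :
    c ≤ limsup f atTop :=
  le_limsup_of_frequently_le (Frequently.of_forall h0) (isBoundedUnder_of ⟨C, h1⟩)

lemma limsup_le_of_bounds {f : ℕ → ℝ} {c C : ℝ} (h0 : ∀ n, c ≤ f n) (h1 : ∀ n, f n ≤ C) :
    limsup f atTop ≤ C :=
  limsup_le_of_le (IsBoundedUnder.isCoboundedUnder_le (isBoundedUnder_of ⟨c, h0⟩))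
    (Eventually.of_forall h1)

lemma limsup_combo {f g h : ℕ → ℝ} {t M : ℝ} (ht : 0 ≤ t) (ht1 : t ≤ 1)
    (hf0 : ∀ n, 0 ≤ f n) (hf1 : ∀ n, f n ≤ M)
    (hg0 : ∀ n, 0 ≤ g n) (hg1 : ∀ n, g n ≤ M)
    (hh0 : ∀ n, 0 ≤ h n)
    (hle : ∀ n, h n ≤ t * f n + (1 - t) * g n) :
    limsup h atTop ≤ t * limsup f atTop + (1 - t) * limsup g atTop := by
  refine le_of_forall_pos_le_add fun ε hε => ?_
  have hef : ∀ᶠ n in atTop, f n < limsup f atTop + ε :=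
    eventually_lt_of_limsup_lt (lt_add_of_pos_right _ hε) (isBoundedUnder_of ⟨M, hf1⟩)
  have heg : ∀ᶠ n in atTop, g n < limsup g atTop + ε :=
    eventually_lt_of_limsup_lt (lt_add_of_pos_right _ hε) (isBoundedUnder_of ⟨M, hg1⟩)
  refine limsup_le_of_le (IsBoundedUnder.isCoboundedUnder_le (isBoundedUnder_of ⟨0, hh0⟩)) ?_
  filter_upwards [hef, heg] with n hfn hgn
  have := hle n
  nlinarith [mul_le_mul_of_nonneg_left hfn.le ht,
    mul_le_mul_of_nonneg_left hgn.le (by linarith : (0:ℝ) ≤ 1 - t)]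

/-- Abstract version of the equivalence, for any function `β` which is bounded above by
`M (1 - s)` on `(0,1]` and convex there. -/
lemma spectral_equiv {β : ℝ → ℝ} {M : ℝ} (hM : 0 < M)
    (hub : ∀ s, 0 < s → s ≤ 1 → β s ≤ M * (1 - s))
    (hconv : ∀ a b t, 0 < a → a ≤ 1 → 0 < b → b ≤ 1 → 0 < t → t < 1 →
      β (t * a + (1 - t) * b) ≤ t * β a + (1 - t) * β b)
    {b : ℝ} (hb : 0 < b) :
    (sInf {s : ℝ | 0 < s ∧ β s - b * s ≤ 0} = M / (M + b) ↔
      ∃ s ∈ Set.Ioo (0:ℝ) 1, β s = M * (1 - s)) ∧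
    ((∃ s ∈ Set.Ioo (0:ℝ) 1, β s = M * (1 - s)) ↔
      ∀ s ∈ Set.Ioo (0:ℝ) 1, β s = M * (1 - s)) := by
  have key : (∃ s ∈ Set.Ioo (0:ℝ) 1, β s = M * (1 - s)) →
      ∀ s ∈ Set.Ioo (0:ℝ) 1, β s = M * (1 - s) := by
    rintro ⟨s₀, ⟨hs₀0, hs₀1⟩, hs₀⟩ s ⟨hs0', hs1'⟩
    refine le_antisymm (hub s hs0' hs1'.le) ?_
    rcases lt_trichotomy s s₀ with hlt | heq | hgt
    · set u := (s₀ + 1)/2 with hu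
      set lam := (u - s₀)/(u - s) with hlam
      have hu0 : 0 < u := by rw [hu]; linarith
      have hu1 : u < 1 := by rw [hu]; linarith
      have hus₀ : s₀ < u := by rw [hu]; linarith
      have husu : 0 < u - s := by linarith
      have hlam0 : 0 < lam := div_pos (by linarith) husu
      have hlam1 : lam < 1 := (div_lt_one husu).2 (by linarith)
      have hcomb : lam * s + (1 - lam) * u = s₀ := by
        rw [hlam]; field_simp; ring
      have h1 := hconv s u lam hs0' hs1'.le hu0 hu1.le hlam0 hlam1
      rw [hcomb, hs₀] at h1
      have h2 := hub u hu0 hu1.le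
      have h4 : (1 - lam) * β u ≤ (1 - lam) * (M * (1 - u)) :=
        mul_le_mul_of_nonneg_left h2 (by linarith)
      have h5 : lam * (M * (1 - s)) = M * (1 - s₀) - (1 - lam) * (M * (1 - u)) := by
        rw [← hcomb]; ring
      have h3 : lam * (M * (1 - s)) ≤ lam * β s := by linarith
      exact le_of_mul_le_mul_left h3 hlam0
    · rw [heq, hs₀]
    · set u := s₀/2 with hu
      set lam := (s - s₀)/(s - u) with hlam
      have hu0 : 0 < u := by rw [hu]; linarith
      have hu1 : u < 1 := by rw [hu]; linarith
      have hus₀ : u < s₀ := by rw [hu]; linarith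
      have husu : 0 < s - u := by linarith
      have hlam0 : 0 < lam := div_pos (by linarith) husu
      have hlam1 : lam < 1 := (div_lt_one husu).2 (by linarith)
      have hcomb : lam * u + (1 - lam) * s = s₀ := by
        rw [hlam]; field_simp; ring
      have h1 := hconv u s lam hu0 hu1.le hs0' hs1'.le hlam0 hlam1
      rw [hcomb, hs₀] at h1
      have h2 := hub u hu0 hu1.le
      have h4 : lam * β u ≤ lam * (M * (1 - u)) :=
        mul_le_mul_of_nonneg_left h2 hlam0.le
      have h5 : (1 - lam) * (M * (1 - s)) = M * (1 - s₀) - lam * (M * (1 - u)) := by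
        rw [← hcomb]; ring
      have h3 : (1 - lam) * (M * (1 - s)) ≤ (1 - lam) * β s := by linarith
      exact le_of_mul_le_mul_left h3 (by linarith)
  have hMb : (0:ℝ) < M + b := by linarith
  set sstar := M / (M + b) with hsstar
  have hs0 : 0 < sstar := div_pos hM hMb
  have hs1 : sstar < 1 := (div_lt_one hMb).2 (by linarith)
  have hbstar : M * (1 - sstar) = b * sstar := by
    rw [hsstar]; field_simp; ring
  have hbdd : BddBelow {s : ℝ | 0 < s ∧ β s - b * s ≤ 0} :=
    ⟨0, fun y hy => hy.1.le⟩
  constructor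
  · constructor
    · intro hi
      by_contra hno
      push_neg at hno
      have hlt : β sstar < M * (1 - sstar) :=
        lt_of_le_of_ne (hub sstar hs0 hs1.le) (hno sstar ⟨hs0, hs1⟩)
      set δ := M * (1 - sstar) - β sstar with hδ
      have hδ0 : 0 < δ := by linarith
      set u := sstar/2 with hu
      have hu0 : 0 < u := by rw [hu]; linarith
      have hu1 : u < 1 := by rw [hu]; linarith
      set t := δ / (M + δ) with ht
      have ht0 : 0 < t := div_pos hδ0 (by linarith)
      have ht1 : t < 1 := (div_lt_one (by linarith)).2 (by linarith)
      have htδ : t * (M + δ) = δ := by rw [ht]; field_simp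
      set x := t * u + (1 - t) * sstar with hx
      have hx0 : 0 < x := by nlinarith
      have hxlt : x < sstar := by nlinarith
      have hmem : x ∈ {s : ℝ | 0 < s ∧ β s - b * s ≤ 0} := by
        refine ⟨hx0, ?_⟩
        have h1 := hconv u sstar t hu0 hu1.le hs0 hs1.le ht0 ht1
        have h2 : β u ≤ M * (1 - u) := hub u hu0 hu1.le
        have h3 : t * β u ≤ t * (M * (1 - u)) := mul_le_mul_of_nonneg_left h2 ht0.le
        -- β x ≤ t M(1-u) + (1-t)(b sstar - δ) ≤ b x
        have hβs : β sstar = b * sstar - δ := by rw [hδ]; linarith [hbstar]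
        have hbx : b * x = t * (b * u) + (1 - t) * (b * sstar) := by rw [hx]; ring
        nlinarith [mul_pos ht0 hu0, mul_pos hb hu0, mul_pos ht0 (mul_pos hb hu0),
          mul_pos ht0 (mul_pos hM hu0)]
      have := csInf_le hbdd hmem
      rw [hi] at this
      linarith
    · intro hex
      have hall := key hex
      have hsS : sstar ∈ {s : ℝ | 0 < s ∧ β s - b * s ≤ 0} := by
        refine ⟨hs0, ?_⟩
        rw [hall sstar ⟨hs0, hs1⟩, hbstar]
        linarith
      apply le_antisymm (csInf_le hbdd hsS)
      apply le_csInf ⟨sstar, hsS⟩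
      intro y hy
      by_contra hylt
      push_neg at hylt
      have hy1 : y < 1 := hylt.trans hs1
      have hyeq : β y = M * (1 - y) := hall y ⟨hy.1, hy1⟩
      have : M * (1 - y) - b * y > 0 := by
        have : M - (M + b) * y > M - (M + b) * sstar := by nlinarith
        have hz : M - (M + b) * sstar = 0 := by rw [hsstar]; field_simp; ring
        nlinarith
      have := hy.2
      rw [hyeq] at this
      linarith
  · exact ⟨key, fun hall => ⟨1/2, ⟨by norm_num, by norm_num⟩, hall (1/2) ⟨by norm_num, by norm_num⟩⟩⟩


lemma lq_le {m : ℕ} {ν : Measure (Fin m → ℝ)} [IsProbabilityMeasure ν]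
    (hν : ν (unitCube m) = 1) {s : ℝ} (hs : 0 < s) (hs1 : s ≤ 1) :
    lqSpectrum m ν s ≤ m * (1 - s) :=
  limsup_le_of_bounds (fun _ => betaN_nonneg hν hs hs1) (fun _ => betaN_le hν hs hs1)

lemma lq_convex {m : ℕ} {ν : Measure (Fin m → ℝ)} [IsProbabilityMeasure ν]
    (hν : ν (unitCube m) = 1) {a b t : ℝ}
    (ha : 0 < a) (ha1 : a ≤ 1) (hb : 0 < b) (hb1 : b ≤ 1) (ht : 0 < t) (ht1 : t < 1) :
    lqSpectrum m ν (t * a + (1 - t) * b)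
      ≤ t * lqSpectrum m ν a + (1 - t) * lqSpectrum m ν b := by
  have hmid : 0 < t * a + (1 - t) * b := by nlinarith
  have hmid1 : t * a + (1 - t) * b ≤ 1 := by nlinarith
  exact limsup_combo (M := (m:ℝ)) ht.le ht1.le
    (fun n => betaN_nonneg hν ha ha1)
    (fun n => (betaN_le hν ha ha1).trans
      (by nlinarith [mul_nonneg (Nat.cast_nonneg (α := ℝ) m) ha.le]))
    (fun n => betaN_nonneg hν hb hb1)
    (fun n => (betaN_le hν hb hb1).trans
      (by nlinarith [mul_nonneg (Nat.cast_nonneg (α := ℝ) m) hb.le]))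
    (fun n => betaN_nonneg hν hmid hmid1)
    (fun n => betaN_convex hν ha ha1 hb hb1 ht ht1)


end Stmt10

open Stmt10 in
/-- **Remark 1.2 (second claim)**: for every `b > 0` the conditions
(i) `s_b = m/(m+b)`, (ii) `β_ν(s) = m(1-s)` for some `s ∈ (0,1)`, and
(iii) `β_ν(s) = m(1-s)` for all `s ∈ (0,1)` are equivalent; in particular, with
`ρ = q(ℓ - m/p) > 0`, `q ≥ p > 1`, one has `-1/(q·s_ρ) = -ℓ/m + 1/p - 1/q`
(`-∞` if `s_ρ = 0`) if and only if `β_ν(s) = m(1-s)` for some (hence all)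
`s ∈ (0,1)`. -/
theorem statement10 (m : ℕ) (hm : 0 < m) (ν : Measure (Fin m → ℝ))
    [IsProbabilityMeasure ν] (hν : ν (unitCube m) = 1) :
    (∀ b : ℝ, 0 < b →
      ((sb m ν b = (m : ℝ) / ((m : ℝ) + b)) ↔
        ∃ s ∈ Set.Ioo (0 : ℝ) 1, lqSpectrum m ν s = (m : ℝ) * (1 - s)) ∧
      ((∃ s ∈ Set.Ioo (0 : ℝ) 1, lqSpectrum m ν s = (m : ℝ) * (1 - s)) ↔
        ∀ s ∈ Set.Ioo (0 : ℝ) 1, lqSpectrum m ν s = (m : ℝ) * (1 - s))) ∧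
    ∀ p q : ℝ, ∀ ℓ : ℕ, p ≤ q → 1 < p → 0 < q * ((ℓ : ℝ) - (m : ℝ) / p) →
      ((if sb m ν (q * ((ℓ : ℝ) - (m : ℝ) / p)) = 0 then (⊥ : EReal)
          else ((-1 / (q * sb m ν (q * ((ℓ : ℝ) - (m : ℝ) / p))) : ℝ) : EReal))
        = ((-(ℓ : ℝ) / (m : ℝ) + 1 / p - 1 / q : ℝ) : EReal) ↔
      ∃ s ∈ Set.Ioo (0 : ℝ) 1, lqSpectrum m ν s = (m : ℝ) * (1 - s)) := by
  have hM : (0:ℝ) < m := by exact_mod_cast hm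
  have hub : ∀ s, 0 < s → s ≤ 1 → lqSpectrum m ν s ≤ (m:ℝ) * (1 - s) :=
    fun s hs hs1 => lq_le hν hs hs1
  have hconv : ∀ a b t, 0 < a → a ≤ 1 → 0 < b → b ≤ 1 → 0 < t → t < 1 →
      lqSpectrum m ν (t * a + (1 - t) * b)
        ≤ t * lqSpectrum m ν a + (1 - t) * lqSpectrum m ν b :=
    fun a b t ha ha1 hb hb1 ht ht1 => lq_convex hν ha ha1 hb hb1 ht ht1
  refine ⟨fun b hb => spectral_equiv hM hub hconv hb, fun p q ℓ hpq hp hρ => ?_⟩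
  set ρ := q * ((ℓ : ℝ) - (m : ℝ) / p) with hρdef
  have hq0 : (0:ℝ) < q := lt_of_lt_of_le (zero_lt_one.trans hp) hpq
  have hp0 : (0:ℝ) < p := zero_lt_one.trans hp
  have hMρ : (0:ℝ) < (m:ℝ) + ρ := by linarith
  set sstar := (m:ℝ) / ((m:ℝ) + ρ) with hsstar
  have hs0 : 0 < sstar := div_pos hM hMρ
  have hcalc : -1 / (q * sstar) = -(ℓ:ℝ)/(m:ℝ) + 1/p - 1/q := by
    rw [hsstar, hρdef]
    have h1 : (m:ℝ) + q * ((ℓ:ℝ) - (m:ℝ)/p) ≠ 0 := by rw [← hρdef]; exact hMρ.ne'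
    field_simp
    ring
  have hiff : (sb m ν ρ = (m:ℝ) / ((m:ℝ) + ρ)) ↔
      ∃ s ∈ Set.Ioo (0:ℝ) 1, lqSpectrum m ν s = (m:ℝ) * (1 - s) :=
    (spectral_equiv hM hub hconv hρ).1
  refine Iff.trans ?_ hiff
  constructor
  · intro heq
    by_cases h0 : sb m ν ρ = 0
    · rw [if_pos h0] at heq
      exact absurd heq (EReal.bot_ne_coe _)
    · rw [if_neg h0] at heq
      have hre : -1 / (q * sb m ν ρ) = -(ℓ:ℝ)/(m:ℝ) + 1/p - 1/q := by exact_mod_cast heq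
      have h2 : -1 / (q * sb m ν ρ) = -1 / (q * sstar) := hre.trans hcalc.symm
      have h3 : (q * sb m ν ρ)⁻¹ = (q * sstar)⁻¹ := by
        rw [neg_div, neg_div, neg_inj, one_div, one_div] at h2
        exact h2
      have h4 : q * sb m ν ρ = q * sstar := inv_injective h3
      exact mul_left_cancel₀ hq0.ne' h4
  · intro hs
    have h0 : sb m ν ρ ≠ 0 := by rw [hs]; exact hs0.ne'
    rw [if_neg h0, hs]
    exact_mod_cast congrArg (fun x : ℝ => (x : EReal)) hcalc
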